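/- For every s ≥ 0, g₀(s) = inf_{T > 0} inf { ∫_{−T}^{T} ( s² f(β(t))² α'(t)² + (1 − β(t))²/4 + β'(t)² ) dt : α, β : [−T,T] → ℝ absolutely continuous with α', β' ∈ L²(−T,T), α(−T) = 0, α(T) = 1, 0 ≤ β ≤ 1 on [−T,T], β(−T) = β(T) = 1 } (equivalence of definitions (6.6) and (6.9) of the paper). -/

import Mathlib

open MeasureTheory Set Filter
open scoped ENNReal

/-- Hypotheses on the functions `f` and `f₁` from Section 6.1 of the paper.
`f : [0,1] → [0,∞]` is real-valued, `C¹` and nondecreasing on `[0,1)` with `f(1) = ∞`,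
`f(t) = 0` iff `t = 0`, and `f₁(s) = s·f(1−s)` (with `f₁(0) = ℓ`) is strictly decreasing,
`u ↦ f₁(√u)` is convex, and `f₁(s) = ℓ − ℓ₁ s + o(s)` as `s → 0⁺`. -/
structure FHyp (ℓ ℓ₁ : ℝ) (f : ℝ → ℝ≥0∞) (f₁ : ℝ → ℝ) : Prop where
  hl : 0 < ℓ
  hl1 : 0 < ℓ₁
  freal : ∀ t ∈ Ico (0:ℝ) 1, f t ≠ ⊤
  fdiff : ∃ d : ℝ → ℝ, ContinuousOn d (Ico 0 1) ∧
    ∀ t ∈ Ico (0:ℝ) 1, HasDerivWithinAt (fun x => (f x).toReal) (d t) (Ico 0 1) t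
  fmono : MonotoneOn (fun x => (f x).toReal) (Ico 0 1)
  fzero : ∀ t ∈ Icc (0:ℝ) 1, (f t = 0 ↔ t = 0)
  ftop : f 1 = ⊤
  hf₁ : ∀ s ∈ Ioc (0:ℝ) 1, f₁ s = s * (f (1 - s)).toReal
  hf₁0 : f₁ 0 = ℓ
  f₁anti : StrictAntiOn f₁ (Icc 0 1)
  convexSqrt : ConvexOn ℝ (Icc 0 1) (fun u => f₁ (Real.sqrt u))
  lim0 : Tendsto (fun s => (f₁ s - ℓ + ℓ₁ * s) / s) (nhdsWithin 0 (Ioi 0)) (nhds 0)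

/-- `u` is locally absolutely continuous on `ℝ` with a.e. derivative `u'`. -/
def LocAC (u u' : ℝ → ℝ) : Prop :=
  (∀ a b : ℝ, IntegrableOn u' (Icc a b)) ∧
  ∀ a t : ℝ, u t = u a + ∫ x in a..t, u' x

/-- Membership of the pair `(α, β)` (with a.e. derivatives `α', β'`) in the class `𝒰₁`
of (6.8): `α' ∈ L¹(ℝ)`, `|∫ α'| = 1`, `0 ≤ β ≤ 1`, and `β(t) → 1` as `|t| → ∞`. -/
def MemU1 (α α' β β' : ℝ → ℝ) : Prop :=
  LocAC α α' ∧ LocAC β β' ∧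
  Integrable α' ∧ |∫ t : ℝ, α' t| = 1 ∧
  (∀ t : ℝ, 0 ≤ β t ∧ β t ≤ 1) ∧
  Tendsto β atTop (nhds 1) ∧ Tendsto β atBot (nhds 1)

/-- The functional `𝒢_s` of (6.7), with values in `[0,∞]` and the convention `∞·0 = 0`. -/
noncomputable def Gfun (f : ℝ → ℝ≥0∞) (s : ℝ) (α' β β' : ℝ → ℝ) : ℝ≥0∞ :=
  ∫⁻ t : ℝ, (ENNReal.ofReal (s ^ 2 * (α' t) ^ 2) * (f (β t)) ^ 2
    + ENNReal.ofReal ((1 - β t) ^ 2 / 4 + (β' t) ^ 2))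

/-- The cohesive energy density `g₀` of pristine material, definition (6.6). -/
noncomputable def g0E (f : ℝ → ℝ≥0∞) (s : ℝ) : ℝ≥0∞ :=
  sInf {x | ∃ α α' β β' : ℝ → ℝ, MemU1 α α' β β' ∧ x = Gfun f s α' β β'}

/-- Admissibility of `(α, β)` (with derivatives `α', β'`) on `[-T, T]` for the finite-interval
characterization (6.9): absolutely continuous with `L²` derivatives, `α(−T) = 0`, `α(T) = 1`,
`0 ≤ β ≤ 1`, `β(±T) = 1`. -/
def AdmT (T : ℝ) (α α' β β' : ℝ → ℝ) : Prop :=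
  IntegrableOn α' (Icc (-T) T) ∧
  IntegrableOn (fun t => (α' t) ^ 2) (Icc (-T) T) ∧
  IntegrableOn β' (Icc (-T) T) ∧
  IntegrableOn (fun t => (β' t) ^ 2) (Icc (-T) T) ∧
  (∀ t ∈ Icc (-T) T, α t = α (-T) + ∫ x in (-T)..t, α' x) ∧
  (∀ t ∈ Icc (-T) T, β t = β (-T) + ∫ x in (-T)..t, β' x) ∧
  α (-T) = 0 ∧ α T = 1 ∧
  (∀ t ∈ Icc (-T) T, 0 ≤ β t ∧ β t ≤ 1) ∧
  β (-T) = 1 ∧ β T = 1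

/-- The energy of (6.9) on the finite interval `[-T, T]`. -/
noncomputable def GfunT (f : ℝ → ℝ≥0∞) (s T : ℝ) (α' β β' : ℝ → ℝ) : ℝ≥0∞ :=
  ∫⁻ t in Icc (-T) T, (ENNReal.ofReal (s ^ 2 * (α' t) ^ 2) * (f (β t)) ^ 2
    + ENNReal.ofReal ((1 - β t) ^ 2 / 4 + (β' t) ^ 2))

-- ================== easy direction ==================

lemma easy_dir (f : ℝ → ℝ≥0∞) (s : ℝ) {T : ℝ} (hT : 0 < T) {α α' β β' : ℝ → ℝ}
    (h : AdmT T α α' β β') : g0E f s ≤ GfunT f s T α' β β' := by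
  obtain ⟨hα'i, -, hβ'i, -, hFTCα, hFTCβ, hαl, hαr, hβb, hβl, hβr⟩ := h
  have hTT : -T ≤ T := by linarith
  set I : Set ℝ := Icc (-T) T with hI
  set a' : ℝ → ℝ := I.indicator α' with ha'
  set b' : ℝ → ℝ := I.indicator β' with hb'
  set bb : ℝ → ℝ := fun t => if t ∈ I then β t else 1 with hbb
  have ha'int : Integrable a' := hα'i.integrable_indicator measurableSet_Icc
  have hb'int : Integrable b' := hβ'i.integrable_indicator measurableSet_Icc
  have haeT : ∀ᵐ x : ℝ, x ≠ -T := by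
    rw [ae_iff]; simp only [not_not, Set.setOf_eq_eq_singleton]
    exact Real.volume_singleton
  -- integral of b' from -T to t
  have hintb' : ∀ t : ℝ, ∫ x in (-T)..t, b' x = if t ∈ I then β t - 1 else 0 := by
    intro t
    rcases le_or_gt (-T) t with h1 | h1
    · rcases le_or_gt t T with h2 | h2
      · have ht : t ∈ I := ⟨h1, h2⟩
        rw [if_pos ht]
        have : ∫ x in (-T)..t, b' x = ∫ x in (-T)..t, β' x := by
          refine intervalIntegral.integral_congr_ae ?_
          refine Filter.Eventually.of_forall fun x hx => ?_
          rw [Set.uIoc_of_le h1] at hx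
          have hx' : x ∈ I := ⟨le_of_lt hx.1, le_trans hx.2 h2⟩
          exact Set.indicator_of_mem hx' β'
        rw [this]
        have := hFTCβ t ht
        rw [hβl] at this
        linarith
      · have ht : t ∉ I := fun hc => absurd hc.2 (not_le.mpr h2)
        rw [if_neg ht]
        have hsplit : (∫ x in (-T)..T, b' x) + ∫ x in T..t, b' x = ∫ x in (-T)..t, b' x :=
          intervalIntegral.integral_add_adjacent_intervals
            hb'int.intervalIntegrable hb'int.intervalIntegrable
        have e1 : ∫ x in (-T)..T, b' x = ∫ x in (-T)..T, β' x := by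
          refine intervalIntegral.integral_congr_ae ?_
          refine Filter.Eventually.of_forall fun x hx => ?_
          rw [Set.uIoc_of_le hTT] at hx
          have hx' : x ∈ I := ⟨le_of_lt hx.1, hx.2⟩
          exact Set.indicator_of_mem hx' β'
        have e2 : ∫ x in T..t, b' x = 0 := by
          have : ∫ x in T..t, b' x = ∫ x in T..t, (0:ℝ) := by
            refine intervalIntegral.integral_congr_ae ?_
            refine Filter.Eventually.of_forall fun x hx => ?_
            rw [Set.uIoc_of_le (le_of_lt h2)] at hx
            exact Set.indicator_of_notMem (fun hc => absurd hc.2 (not_le.mpr hx.1)) β'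
          simp [this]
        have e3 : ∫ x in (-T)..T, β' x = 0 := by
          have := hFTCβ T ⟨hTT, le_refl T⟩
          rw [hβl, hβr] at this; linarith
        rw [← hsplit, e1, e2, e3, add_zero]
    · have ht : t ∉ I := fun hc => absurd hc.1 (not_le.mpr h1)
      rw [if_neg ht]
      have : ∫ x in (-T)..t, b' x = ∫ x in (-T)..t, (0:ℝ) := by
        refine intervalIntegral.integral_congr_ae ?_
        filter_upwards [haeT] with x hxT hx
        rw [Set.uIoc_of_ge (le_of_lt h1)] at hx
        refine Set.indicator_of_notMem (fun hc => ?_) β'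
        exact hxT (le_antisymm hx.2 hc.1)
      simp [this]
  -- the extended functions
  set A : ℝ → ℝ := fun t => ∫ x in (-T)..t, a' x with hA
  have hmem : MemU1 A a' bb b' := by
    refine ⟨⟨fun a b => ha'int.integrableOn, fun a t => ?_⟩,
      ⟨fun a b => hb'int.integrableOn, fun a t => ?_⟩,
      ha'int, ?_, ?_, ?_, ?_⟩
    · simp only [hA]
      exact (intervalIntegral.integral_add_adjacent_intervals
        ha'int.intervalIntegrable ha'int.intervalIntegrable).symm
    · have key : ∀ u : ℝ, bb u = 1 + ∫ x in (-T)..u, b' x := by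
        intro u
        rw [hintb']
        by_cases hu : u ∈ I
        · simp only [if_pos hu, hbb]; ring
        · simp only [if_neg hu, hbb]; norm_num
      rw [key t, key a]
      have := intervalIntegral.integral_add_adjacent_intervals
        (hb'int.intervalIntegrable (a := -T) (b := a))
        (hb'int.intervalIntegrable (a := a) (b := t))
      rw [← this]; ring
    · have : ∫ t : ℝ, a' t = ∫ t in I, α' t := integral_indicator measurableSet_Icc
      rw [this, hI, integral_Icc_eq_integral_Ioc, ← intervalIntegral.integral_of_le hTT]
      have := hFTCα T ⟨hTT, le_refl T⟩
      rw [hαl, hαr] at this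
      have h4 : ∫ x in (-T)..T, α' x = 1 := by linarith
      rw [h4]; norm_num
    · intro t
      by_cases ht : t ∈ I
      · simp only [hbb, if_pos ht]; exact hβb t ht
      · simp only [hbb, if_neg ht]; norm_num
    · refine Tendsto.congr' ?_ tendsto_const_nhds
      filter_upwards [Filter.eventually_gt_atTop T] with t ht
      simp only [hbb]
      exact (if_neg (fun hc : t ∈ I => absurd hc.2 (not_le.mpr ht))).symm
    · refine Tendsto.congr' ?_ tendsto_const_nhds
      filter_upwards [Filter.eventually_lt_atBot (-T)] with t ht
      simp only [hbb]
      exact (if_neg (fun hc : t ∈ I => absurd hc.1 (not_le.mpr ht))).symm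
  -- energy identity
  have henergy : Gfun f s a' bb b' = GfunT f s T α' β β' := by
    rw [Gfun, GfunT]
    rw [← lintegral_add_compl (μ := volume)
      (f := fun t => ENNReal.ofReal (s ^ 2 * (a' t) ^ 2) * (f (bb t)) ^ 2
        + ENNReal.ofReal ((1 - bb t) ^ 2 / 4 + (b' t) ^ 2)) (measurableSet_Icc (a := -T) (b := T))]
    have e0 : ∫⁻ t in Iᶜ, (ENNReal.ofReal (s ^ 2 * (a' t) ^ 2) * (f (bb t)) ^ 2
        + ENNReal.ofReal ((1 - bb t) ^ 2 / 4 + (b' t) ^ 2)) = 0 := by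
      rw [setLIntegral_congr_fun (measurableSet_Icc.compl)
        (fun t (ht : t ∈ Iᶜ) => ?_), lintegral_zero]
      have h1 : a' t = 0 := Set.indicator_of_notMem ht α'
      have h2 : b' t = 0 := Set.indicator_of_notMem ht β'
      have h3 : bb t = 1 := by simp only [hbb, if_neg ht]
      rw [h1, h2, h3]
      norm_num
    have e1 : ∫⁻ t in I, (ENNReal.ofReal (s ^ 2 * (a' t) ^ 2) * (f (bb t)) ^ 2
        + ENNReal.ofReal ((1 - bb t) ^ 2 / 4 + (b' t) ^ 2))
        = ∫⁻ t in Icc (-T) T, (ENNReal.ofReal (s ^ 2 * (α' t) ^ 2) * (f (β t)) ^ 2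
        + ENNReal.ofReal ((1 - β t) ^ 2 / 4 + (β' t) ^ 2)) := by
      refine setLIntegral_congr_fun measurableSet_Icc
        (fun t ht => ?_)
      have h1 : a' t = α' t := Set.indicator_of_mem ht α'
      have h2 : b' t = β' t := Set.indicator_of_mem ht β'
      have h3 : bb t = β t := by simp only [hbb, if_pos ht]
      rw [h1, h2, h3]
    rw [e0, e1, add_zero]
  rw [g0E, ← henergy]
  exact sInf_le ⟨A, a', bb, b', hmem, rfl⟩

-- ================== helpers for the hard direction ==================

lemma ae_ne_real (a : ℝ) : ∀ᵐ x : ℝ, x ≠ a := by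
  rw [ae_iff]; simp only [not_not, Set.setOf_eq_eq_singleton]
  exact Real.volume_singleton

noncomputable def clampf (N a : ℝ) : ℝ := max (-N) (min N a)

lemma clampf_abs_le_self {N a : ℝ} (hN : 0 ≤ N) : |clampf N a| ≤ |a| := by
  rw [abs_le]; constructor
  · exact le_max_of_le_right (le_min (by linarith [abs_nonneg a, neg_abs_le a]) (neg_abs_le a))
  · exact max_le (by linarith [abs_nonneg a]) (le_trans (min_le_right _ _) (le_abs_self a))

lemma clampf_abs_le {N a : ℝ} (hN : 0 ≤ N) : |clampf N a| ≤ N := by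
  rw [abs_le]; exact ⟨le_max_left _ _, max_le (by linarith) (min_le_left _ _)⟩

lemma clampf_eq {N a : ℝ} (h : |a| ≤ N) : clampf N a = a := by
  rw [abs_le] at h
  rw [clampf, min_eq_right h.2, max_eq_right h.1]

lemma sq_le_of_abs_le {a b : ℝ} (h : |a| ≤ b) : a ^ 2 ≤ b ^ 2 := by
  nlinarith [abs_nonneg a, sq_abs a]

lemma clampf_sq_le {N a : ℝ} (hN : 0 ≤ N) : (clampf N a) ^ 2 ≤ a ^ 2 := by
  have h := clampf_abs_le_self (a := a) hN
  calc (clampf N a) ^ 2 ≤ |a| ^ 2 := sq_le_of_abs_le h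
  _ = a ^ 2 := sq_abs a

lemma ramp_mem {b u : ℝ} (hb0 : 0 ≤ b) (hb1 : b ≤ 1) (hu0 : 0 ≤ u) (hu1 : u ≤ 1) :
    0 ≤ b + u * (1 - b) ∧ b + u * (1 - b) ≤ 1 := by
  constructor
  · nlinarith
  · nlinarith

lemma ramp_energy_le {b u η : ℝ} (hb1 : b ≤ 1) (hbη : 1 - b ≤ η) (hu0 : 0 ≤ u)
    (hu1 : u ≤ 1) (hη : 0 ≤ η) :
    (1 - (b + u * (1 - b))) ^ 2 / 4 + (b - 1) ^ 2 ≤ η ^ 2 / 4 + η ^ 2 := by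
  have h1 : 0 ≤ 1 - b := by linarith
  have hv0 : 0 ≤ 1 - (b + u * (1 - b)) := by nlinarith
  have hv1 : 1 - (b + u * (1 - b)) ≤ η := by nlinarith
  have e1 : (1 - (b + u * (1 - b))) ^ 2 ≤ η ^ 2 := by nlinarith
  have e2 : (b - 1) ^ 2 ≤ η ^ 2 := by nlinarith
  linarith

lemma mid_first_le {s c gv av M : ℝ} (hM : c ^ 2 ≤ M) (hg : gv ^ 2 ≤ av ^ 2) :
    s ^ 2 * (c * gv) ^ 2 ≤ M * (s ^ 2 * av ^ 2) := by
  have hM0 : 0 ≤ M := le_trans (sq_nonneg c) hM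
  have h1 : c ^ 2 * gv ^ 2 ≤ M * av ^ 2 :=
    le_trans (mul_le_mul_of_nonneg_right hM (sq_nonneg gv))
      (mul_le_mul_of_nonneg_left hg hM0)
  nlinarith [mul_le_mul_of_nonneg_left h1 (sq_nonneg s)]

-- ================== hard direction ==================

set_option maxHeartbeats 4000000 in
lemma hard_dir (f : ℝ → ℝ≥0∞) (s : ℝ) {α α' β β' : ℝ → ℝ} (h : MemU1 α α' β β') :
    (⨅ (T : ℝ) (_ : 0 < T),
      sInf {x | ∃ α α' β β' : ℝ → ℝ, AdmT T α α' β β' ∧ x = GfunT f s T α' β β'})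
      ≤ Gfun f s α' β β' := by
  obtain ⟨hlocα, hlocβ, hα'int, hα'abs, hβbd, hβtop, hβbot⟩ := h
  set x := Gfun f s α' β β' with hx
  set F : ℝ → ℝ≥0∞ := fun t => ENNReal.ofReal (s ^ 2 * (α' t) ^ 2) * (f (β t)) ^ 2
      + ENNReal.ofReal ((1 - β t) ^ 2 / 4 + (β' t) ^ 2) with hF
  have hFx : ∫⁻ t, F t = x := rfl
  refine ENNReal.le_of_forall_pos_le_add fun ε hε hxtop => ?_
  have hεR : (0:ℝ) < (ε:ℝ) := hε
  set e := x.toReal with hee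
  have he0 : (0:ℝ) ≤ e := ENNReal.toReal_nonneg
  have hxe : x = ENNReal.ofReal e := (ENNReal.ofReal_toReal hxtop.ne).symm
  -- parameters δ, η
  set δ : ℝ := min (1/2) ((ε:ℝ)/(16*(e+1))) with hδdef
  have hδpos : 0 < δ := lt_min (by norm_num) (by positivity)
  have hδhalf : δ ≤ 1/2 := min_le_left _ _
  have hδe : 8*δ*e ≤ (ε:ℝ)/2 := by
    have h1 : δ ≤ (ε:ℝ)/(16*(e+1)) := min_le_right _ _
    have h2 : δ * (16*(e+1)) ≤ (ε:ℝ) := by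
      have := mul_le_mul_of_nonneg_right h1 (by positivity : (0:ℝ) ≤ 16*(e+1))
      rwa [div_mul_cancel₀ _ (by positivity : (16:ℝ)*(e+1) ≠ 0)] at this
    nlinarith [hδpos.le]
  set η : ℝ := Real.sqrt ((ε:ℝ)/5) with hηdef
  have hηpos : 0 < η := Real.sqrt_pos.mpr (by positivity)
  have hηsq : η^2 = (ε:ℝ)/5 := Real.sq_sqrt (by positivity)
  -- choose the truncation level N
  have hconv : Tendsto (fun n : ℕ => ∫ t, clampf n (α' t)) atTop (nhds (∫ t, α' t)) := by
    refine tendsto_integral_of_dominated_convergence (fun t => |α' t|)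
      (fun n => ?_) hα'int.abs (fun n => Filter.Eventually.of_forall fun t => ?_)
      (Filter.Eventually.of_forall fun t => ?_)
    · exact (Continuous.comp_aestronglyMeasurable
        (continuous_const.max (continuous_const.min continuous_id))
        hα'int.aestronglyMeasurable)
    · rw [Real.norm_eq_abs]; exact clampf_abs_le_self (Nat.cast_nonneg n)
    · have hev : ∀ᶠ n : ℕ in atTop, clampf n (α' t) = α' t := by
        obtain ⟨m, hm⟩ := exists_nat_ge (|α' t|)
        filter_upwards [Filter.eventually_ge_atTop m] with n hn
        exact clampf_eq (le_trans hm (by exact_mod_cast hn))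
      exact Tendsto.congr' (hev.mono fun n hn => hn.symm) tendsto_const_nhds
  rw [Metric.tendsto_atTop] at hconv
  obtain ⟨N, hN⟩ := hconv (δ/2) (by positivity)
  have hNdist : |(∫ t, clampf N (α' t)) - ∫ t, α' t| ≤ δ/2 := by
    have := hN N (le_refl N); rw [Real.dist_eq] at this; linarith
  set g : ℝ → ℝ := fun t => clampf N (α' t) with hgdef
  have hgsm : AEStronglyMeasurable g volume :=
    (Continuous.comp_aestronglyMeasurable
      (continuous_const.max (continuous_const.min continuous_id))
      hα'int.aestronglyMeasurable)
  have hg_int : Integrable g := Integrable.mono' hα'int.abs hgsm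
    (Filter.Eventually.of_forall fun t => by
      rw [Real.norm_eq_abs]; exact clampf_abs_le_self (Nat.cast_nonneg N))
  have hgN : ∀ t, |g t| ≤ N := fun t => clampf_abs_le (Nat.cast_nonneg N)
  have hgsq : ∀ t, (g t)^2 ≤ (α' t)^2 := fun t => clampf_sq_le (Nat.cast_nonneg N)
  -- choose T
  have hItend : Tendsto (fun T : ℝ => ∫ u in (-T)..T, g u) atTop (nhds (∫ u, g u)) :=
    intervalIntegral_tendsto_integral hg_int tendsto_neg_atTop_atBot tendsto_id
  rw [Metric.tendsto_atTop] at hItend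
  obtain ⟨M3, hM3⟩ := hItend (δ/2) (by positivity)
  obtain ⟨M1, hM1⟩ := Metric.tendsto_atTop.mp hβtop η hηpos
  obtain ⟨M2, hM2⟩ := Metric.tendsto_atTop.mp (hβbot.comp tendsto_neg_atTop_atBot) η hηpos
  set T := max (max M1 M2) (max M3 1) with hTdef
  have hT1 : 1 ≤ T := le_trans (le_max_right M3 1) (le_max_right _ _)
  have hT0 : 0 < T := lt_of_lt_of_le one_pos hT1
  have hβ_hi : ∀ u : ℝ, T ≤ u → 1 - β u ≤ η := by
    intro u hu
    have := hM1 u (le_trans (le_trans (le_max_left M1 M2) (le_max_left _ _)) hu)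
    rw [Real.dist_eq] at this
    calc 1 - β u ≤ |β u - 1| := by rw [abs_sub_comm]; exact le_abs_self _
    _ ≤ η := this.le
  have hβ_lo : ∀ u : ℝ, u ≤ -T → 1 - β u ≤ η := by
    intro u hu
    have hM2' : M2 ≤ -u := by
      have := le_trans (le_trans (le_max_right M1 M2) (le_max_left _ _)) (by linarith : T ≤ -u)
      exact this
    have := hM2 (-u) hM2'
    simp only [Function.comp] at this
    rw [Real.dist_eq, neg_neg] at this
    calc 1 - β u ≤ |β u - 1| := by rw [abs_sub_comm]; exact le_abs_self _
    _ ≤ η := this.le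
  have hJ3 := hM3 T (le_trans (le_max_left M3 1) (le_max_right _ _))
  rw [Real.dist_eq] at hJ3
  set J := ∫ u in (-T)..T, g u with hJdef
  have hJI : |J - ∫ t, α' t| ≤ δ := by
    have h1 : |J - ∫ u, g u| ≤ δ/2 := hJ3.le
    calc |J - ∫ t, α' t| ≤ |J - ∫ u, g u| + |(∫ u, g u) - ∫ t, α' t| := abs_sub_le _ _ _
    _ ≤ δ/2 + δ/2 := add_le_add h1 hNdist
    _ = δ := by ring
  have hJabs : 1 - δ ≤ |J| := by
    have h1 : |(∫ t, α' t)| - |J| ≤ |(∫ t, α' t) - J| := abs_sub_abs_le_abs_sub _ _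
    rw [abs_sub_comm] at h1
    rw [hα'abs] at h1
    linarith
  have hJne : J ≠ 0 := by
    intro hc; rw [hc, abs_zero] at hJabs; linarith
  set c := J⁻¹ with hcdef
  have hJsq : (1-δ)^2 ≤ J^2 := by
    have h0 : (0:ℝ) ≤ 1 - δ := by linarith
    calc (1-δ)^2 ≤ |J|^2 := by nlinarith [hJabs]
    _ = J^2 := sq_abs J
  have hcJ : c^2 * J^2 = 1 := by
    rw [hcdef, inv_pow]; exact inv_mul_cancel₀ (pow_ne_zero 2 hJne)
  have hkey : 1 ≤ (1-δ)^2 * (1+8*δ) := by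
    nlinarith [mul_nonneg hδpos.le (sq_nonneg (1-2*δ)),
      mul_nonneg hδpos.le (by linarith : (0:ℝ) ≤ 4 - 7*δ)]
  have hA : c^2*(1-δ)^2 ≤ 1 := by
    calc c^2*(1-δ)^2 ≤ c^2*J^2 := mul_le_mul_of_nonneg_left hJsq (sq_nonneg c)
    _ = 1 := hcJ
  have hc2 : c^2 ≤ 1+8*δ := by
    nlinarith [hA, hkey, sq_nonneg c, hδpos.le, (by linarith : (0:ℝ) ≤ 1+8*δ)]
  set M : ℝ := max (c^2) 1 with hMdef
  have hM1' : 1 ≤ M := le_max_right _ _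
  have hMc : c^2 ≤ M := le_max_left _ _
  have hM8 : M ≤ 1 + 8*δ := max_le hc2 (by linarith)
  have hM0 : (0:ℝ) ≤ M := by linarith
  -- the competitor on [-T', T']
  set T' : ℝ := T + 1 with hT'def
  have hT'0 : 0 < T' := by linarith
  set b1 := β (-T) with hb1def
  set b2 := β T with hb2def
  have hb1m := hβbd (-T)
  have hb2m := hβbd T
  have hb1η : 1 - b1 ≤ η := hβ_lo (-T) (le_refl _)
  have hb2η : 1 - b2 ≤ η := hβ_hi T (le_refl _)
  set aa' : ℝ → ℝ := (Icc (-T) T).indicator (fun t => c * g t) with haa'def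
  set AA : ℝ → ℝ := fun t => ∫ u in (-T')..t, aa' u with hAAdef
  set bb : ℝ → ℝ := fun t => if t ≤ -T then b1 + (-T - t)*(1 - b1)
      else if t < T then β t else b2 + (t - T)*(1 - b2) with hbbdef
  set bb' : ℝ → ℝ := fun t => if t ≤ -T then b1 - 1
      else if t < T then β' t else 1 - b2 with hbb'def
  -- integrability of aa'
  have haa'int : Integrable aa' := (hg_int.const_mul c).indicator measurableSet_Icc
  have hvol : volume (Icc (-T') T') ≠ ⊤ := measure_Icc_lt_top.ne
  have haa'bd : ∀ t, |aa' t| ≤ |c| * N := by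
    intro t; by_cases ht : t ∈ Icc (-T) T
    · rw [haa'def, Set.indicator_of_mem ht, abs_mul]
      exact mul_le_mul_of_nonneg_left (hgN t) (abs_nonneg c)
    · rw [haa'def, Set.indicator_of_notMem ht, abs_zero]
      positivity
  have haa'sq : IntegrableOn (fun t => (aa' t) ^ 2) (Icc (-T') T') := by
    refine Measure.integrableOn_of_bounded (M := (|c| * N)^2) hvol ?_
      (Filter.Eventually.of_forall fun t => ?_)
    · have e1 : (fun t => (aa' t) ^ 2) = fun t => aa' t * aa' t := by funext t; ring
      rw [e1]; exact haa'int.aestronglyMeasurable.mul haa'int.aestronglyMeasurable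
    · rw [Real.norm_eq_abs, abs_pow]
      exact pow_le_pow_left₀ (abs_nonneg _) (haa'bd t) 2
  -- integrability of bb' and its square
  have hβ'I : IntegrableOn β' (Icc (-T) T) := hlocβ.1 (-T) T
  have hsqle : ∀ t : ℝ, ENNReal.ofReal ((β' t) ^ 2) ≤ F t := by
    intro t
    refine le_trans (ENNReal.ofReal_le_ofReal ?_) le_add_self
    nlinarith [sq_nonneg (1 - β t)]
  have hβ'sqlt : ∫⁻ t, ENNReal.ofReal ((β' t) ^ 2) < ⊤ :=
    lt_of_le_of_lt (le_trans (lintegral_mono hsqle) (le_of_eq hFx)) hxtop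
  have hβ'sqI : IntegrableOn (fun t => (β' t) ^ 2) (Icc (-T) T) := by
    refine ⟨?_, ?_⟩
    · have h1 := hβ'I.aestronglyMeasurable
      have e1 : (fun t => (β' t) ^ 2) = fun t => β' t * β' t := by funext t; ring
      rw [e1]; exact h1.mul h1
    · rw [hasFiniteIntegral_iff_ofReal (Filter.Eventually.of_forall fun t => sq_nonneg _)]
      calc ∫⁻ t in Icc (-T) T, ENNReal.ofReal ((β' t) ^ 2)
          ≤ ∫⁻ t, ENNReal.ofReal ((β' t) ^ 2) := setLIntegral_le_lintegral _ _
        _ < ⊤ := hβ'sqlt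
  have hmemIoc : ∀ u : ℝ, u ∈ Ioc (-T) T → u ≠ T → (¬ u ≤ -T) ∧ u < T := by
    intro u hu hne
    exact ⟨not_le.mpr hu.1, lt_of_le_of_ne hu.2 hne⟩
  have hbb'eqae : ∀ᵐ u ∂(volume.restrict (Ioc (-T) T)), β' u = bb' u := by
    filter_upwards [(ae_ne_real T).filter_mono (ae_mono Measure.restrict_le_self),
      ae_restrict_mem measurableSet_Ioc] with u h1 h2
    obtain ⟨hh1, hh2⟩ := hmemIoc u h2 h1
    simp only [hbb'def]
    rw [if_neg hh1, if_pos hh2]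
  have hbb'sqeqae : ∀ᵐ u ∂(volume.restrict (Ioc (-T) T)),
      (fun t => (β' t) ^ 2) u = (fun t => (bb' t) ^ 2) u := by
    filter_upwards [hbb'eqae] with u hu
    simp only [hu]
  have hbb'mid : IntegrableOn bb' (Ioc (-T) T) :=
    (hβ'I.mono_set Ioc_subset_Icc_self).congr_fun_ae hbb'eqae
  have hbb'sqmid : IntegrableOn (fun t => (bb' t) ^ 2) (Ioc (-T) T) :=
    (hβ'sqI.mono_set Ioc_subset_Icc_self).congr_fun_ae hbb'sqeqae
  have hbb'left : IntegrableOn bb' (Icc (-T') (-T)) := by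
    refine ((integrableOn_const (C := b1 - 1) measure_Icc_lt_top.ne)).congr_fun (fun u hu => ?_) measurableSet_Icc
    simp only [hbb'def]; rw [if_pos hu.2]
  have hbb'sqleft : IntegrableOn (fun t => (bb' t) ^ 2) (Icc (-T') (-T)) := by
    refine ((integrableOn_const (C := (b1 - 1) ^ 2) measure_Icc_lt_top.ne)).congr_fun (fun u hu => ?_) measurableSet_Icc
    simp only [hbb'def]; rw [if_pos hu.2]
  have hnotle : ∀ u : ℝ, T < u → ((¬ u ≤ -T) ∧ ¬ u < T) := by
    intro u hu
    exact ⟨not_le.mpr (by linarith), not_lt.mpr hu.le⟩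
  have hbb'right : IntegrableOn bb' (Ioc T T') := by
    refine ((integrableOn_const (C := 1 - b2) measure_Ioc_lt_top.ne)).congr_fun (fun u hu => ?_) measurableSet_Ioc
    obtain ⟨hh1, hh2⟩ := hnotle u hu.1
    simp only [hbb'def]; rw [if_neg hh1, if_neg hh2]
  have hbb'sqright : IntegrableOn (fun t => (bb' t) ^ 2) (Ioc T T') := by
    refine ((integrableOn_const (C := (1 - b2) ^ 2) measure_Ioc_lt_top.ne)).congr_fun (fun u hu => ?_) measurableSet_Ioc
    obtain ⟨hh1, hh2⟩ := hnotle u hu.1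
    simp only [hbb'def]; rw [if_neg hh1, if_neg hh2]
  have hIccsplit : Icc (-T') T' = (Icc (-T') (-T) ∪ Ioc (-T) T) ∪ Ioc T T' := by
    rw [Icc_union_Ioc_eq_Icc (by linarith) (by linarith),
      Icc_union_Ioc_eq_Icc (by linarith) (by linarith)]
  have hbb'int : IntegrableOn bb' (Icc (-T') T') := by
    rw [hIccsplit]; exact (hbb'left.union hbb'mid).union hbb'right
  have hbb'sqint : IntegrableOn (fun t => (bb' t) ^ 2) (Icc (-T') T') := by
    rw [hIccsplit]; exact (hbb'sqleft.union hbb'sqmid).union hbb'sqright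
  -- interval integrability helpers
  have hbb'ii : ∀ u v : ℝ, u ∈ Icc (-T') T' → v ∈ Icc (-T') T' →
      IntervalIntegrable bb' volume u v := by
    intro u v hu hv
    exact ((hbb'int.mono_set (Set.uIcc_subset_Icc hu hv))).intervalIntegrable
  have haaii : ∀ u v : ℝ, IntervalIntegrable aa' volume u v :=
    fun u v => haa'int.intervalIntegrable
  -- integral computations for bb'
  have hS1 : ∫ u in (-T')..(-T), bb' u = b1 - 1 := by
    have e1 : ∫ u in (-T')..(-T), bb' u = ∫ u in (-T')..(-T), (b1 - 1) := by
      refine intervalIntegral.integral_congr fun u hu => ?_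
      rw [Set.uIcc_of_le (by linarith : -T' ≤ -T)] at hu
      simp only [hbb'def]; rw [if_pos hu.2]
    rw [e1, intervalIntegral.integral_const]
    have e2 : -T - -T' = 1 := by rw [hT'def]; ring
    rw [e2, one_smul]
  have hS2 : ∀ t, -T ≤ t → t ≤ T → ∫ u in (-T)..t, bb' u = β t - b1 := by
    intro t h1 h2
    have e1 : ∫ u in (-T)..t, bb' u = ∫ u in (-T)..t, β' u := by
      refine intervalIntegral.integral_congr_ae ?_
      filter_upwards [ae_ne_real T] with u hu hmem
      rw [Set.uIoc_of_le h1] at hmem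
      simp only [hbb'def]
      rw [if_neg (not_le.mpr hmem.1), if_pos (lt_of_le_of_ne (le_trans hmem.2 h2) hu)]
    rw [e1]
    linarith [hlocβ.2 (-T) t]
  have hS3 : ∀ t, T ≤ t → ∫ u in T..t, bb' u = (t - T) * (1 - b2) := by
    intro t ht
    have e1 : ∫ u in T..t, bb' u = ∫ u in T..t, (1 - b2) := by
      refine intervalIntegral.integral_congr fun u hu => ?_
      rw [Set.uIcc_of_le ht] at hu
      simp only [hbb'def]
      rw [if_neg (not_le.mpr (lt_of_lt_of_le (by linarith : -T < T) hu.1)),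
        if_neg (not_lt.mpr hu.1)]
    rw [e1, intervalIntegral.integral_const, smul_eq_mul]
  -- integral computations for aa'
  have hA1 : ∫ u in (-T')..(-T), aa' u = 0 := by
    have e1 : ∫ u in (-T')..(-T), aa' u = ∫ u in (-T')..(-T), (0:ℝ) := by
      refine intervalIntegral.integral_congr_ae ?_
      filter_upwards [ae_ne_real (-T)] with u hu hmem
      rw [Set.uIoc_of_le (by linarith : -T' ≤ -T)] at hmem
      exact Set.indicator_of_notMem (fun hc => hu (le_antisymm hmem.2 hc.1)) _
    rw [e1, intervalIntegral.integral_zero]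
  have hA2 : ∫ u in (-T)..T, aa' u = c * J := by
    have e1 : ∫ u in (-T)..T, aa' u = ∫ u in (-T)..T, c * g u := by
      refine intervalIntegral.integral_congr_ae ?_
      refine Filter.Eventually.of_forall fun u hmem => ?_
      rw [Set.uIoc_of_le (by linarith : -T ≤ T)] at hmem
      have hmem' : u ∈ Icc (-T) T := ⟨hmem.1.le, hmem.2⟩
      exact Set.indicator_of_mem hmem' _
    rw [e1, intervalIntegral.integral_const_mul]
  have hA3 : ∫ u in T..T', aa' u = 0 := by
    have e1 : ∫ u in T..T', aa' u = ∫ u in T..T', (0:ℝ) := by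
      refine intervalIntegral.integral_congr_ae ?_
      refine Filter.Eventually.of_forall fun u hmem => ?_
      rw [Set.uIoc_of_le (by linarith : T ≤ T')] at hmem
      exact Set.indicator_of_notMem (fun hc => absurd hc.2 (not_le.mpr hmem.1)) _
    rw [e1, intervalIntegral.integral_zero]
  -- values of AA
  have hAAl : AA (-T') = 0 := by
    simp only [hAAdef]; exact intervalIntegral.integral_same
  have hAAr : AA T' = 1 := by
    simp only [hAAdef]
    rw [← intervalIntegral.integral_add_adjacent_intervals (haaii (-T') (-T)) (haaii (-T) T'),
        ← intervalIntegral.integral_add_adjacent_intervals (haaii (-T) T) (haaii T T'),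
        hA1, hA2, hA3, zero_add, add_zero, hcdef]
    exact inv_mul_cancel₀ hJne
  -- values of bb
  have hbbl : bb (-T') = 1 := by
    simp only [hbbdef]
    rw [if_pos (by linarith : -T' ≤ -T)]
    have e2 : -T - -T' = 1 := by rw [hT'def]; ring
    rw [e2]; ring
  have hbbr : bb T' = 1 := by
    simp only [hbbdef]
    rw [if_neg (not_le.mpr (by linarith : -T < T')), if_neg (not_lt.mpr (by linarith : T ≤ T'))]
    have e2 : T' - T = 1 := by rw [hT'def]; ring
    rw [e2]; ring
  -- FTC for bb
  have hbbFTC : ∀ t ∈ Icc (-T') T', bb t = bb (-T') + ∫ u in (-T')..t, bb' u := by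
    intro t ht
    rw [hbbl]
    rcases le_or_gt t (-T) with h1 | h1
    · have e1 : ∫ u in (-T')..t, bb' u = (t - -T') • (b1 - 1) := by
        rw [← intervalIntegral.integral_const]
        refine intervalIntegral.integral_congr fun u hu => ?_
        rw [Set.uIcc_of_le ht.1] at hu
        simp only [hbb'def]; rw [if_pos (le_trans hu.2 h1)]
      rw [e1, smul_eq_mul]
      simp only [hbbdef]
      rw [if_pos h1, hT'def]; ring
    · rw [← intervalIntegral.integral_add_adjacent_intervals
        (hbb'ii (-T') (-T) ⟨le_refl _, by linarith⟩ ⟨by linarith, by linarith⟩)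
        (hbb'ii (-T) t ⟨by linarith, by linarith⟩ ht), hS1]
      rcases le_or_gt t T with h2 | h2
      · rw [hS2 t h1.le h2]
        have hbbeq : bb t = β t := by
          simp only [hbbdef]
          rw [if_neg (not_le.mpr h1)]
          by_cases h3 : t < T
          · rw [if_pos h3]
          · have h4 : t = T := le_antisymm h2 (not_lt.mp h3)
            rw [if_neg h3, h4, ← hb2def]; ring
        rw [hbbeq]; ring
      · rw [← intervalIntegral.integral_add_adjacent_intervals
          (hbb'ii (-T) T ⟨by linarith, by linarith⟩ ⟨by linarith, by linarith⟩)
          (hbb'ii T t ⟨by linarith, by linarith⟩ ht),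
          hS2 T (by linarith) le_rfl, hS3 t h2.le]
        simp only [hbbdef]
        rw [if_neg (not_le.mpr (by linarith : -T < t)), if_neg (not_lt.mpr h2.le), ← hb2def]
        ring
  -- bounds for bb
  have hbbmem : ∀ t ∈ Icc (-T') T', 0 ≤ bb t ∧ bb t ≤ 1 := by
    intro t ht
    simp only [hbbdef]
    rcases le_or_gt t (-T) with h1 | h1
    · rw [if_pos h1]
      have h4 : 0 ≤ -T - t := by linarith
      have h5 : -T - t ≤ 1 := by
        have h6 := ht.1; rw [hT'def] at h6; linarith
      exact ramp_mem hb1m.1 hb1m.2 h4 h5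
    · rw [if_neg (not_le.mpr h1)]
      by_cases h2 : t < T
      · rw [if_pos h2]; exact hβbd t
      · rw [if_neg h2]
        have h4 : 0 ≤ t - T := by linarith [not_lt.mp h2]
        have h5 : t - T ≤ 1 := by
          have h6 := ht.2; rw [hT'def] at h6; linarith
        exact ramp_mem hb2m.1 hb2m.2 h4 h5
  -- admissibility
  have hadm : AdmT T' AA aa' bb bb' := by
    refine ⟨haa'int.integrableOn, haa'sq, hbb'int, hbb'sqint, fun t _ => ?_, hbbFTC,
      hAAl, hAAr, hbbmem, hbbl, hbbr⟩
    rw [hAAl, zero_add]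
  -- energy estimates
  have hCη : (0:ℝ) ≤ η^2/4 + η^2 := by positivity
  have hleft : ∫⁻ t in Icc (-T') (-T),
      (ENNReal.ofReal (s ^ 2 * aa' t ^ 2) * f (bb t) ^ 2
        + ENNReal.ofReal ((1 - bb t) ^ 2 / 4 + bb' t ^ 2))
      ≤ ENNReal.ofReal (η^2/4 + η^2) := by
    have hb : ∀ᵐ t ∂(volume.restrict (Icc (-T') (-T))),
        (ENNReal.ofReal (s ^ 2 * aa' t ^ 2) * f (bb t) ^ 2
          + ENNReal.ofReal ((1 - bb t) ^ 2 / 4 + bb' t ^ 2))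
        ≤ ENNReal.ofReal (η^2/4 + η^2) := by
      filter_upwards [(ae_ne_real (-T)).filter_mono (ae_mono Measure.restrict_le_self),
        ae_restrict_mem measurableSet_Icc] with t h1 h2
      have ht' : t < -T := lt_of_le_of_ne h2.2 h1
      have ha0 : aa' t = 0 :=
        Set.indicator_of_notMem (fun hc => absurd hc.1 (not_le.mpr ht')) _
      have hbv : bb t = b1 + (-T - t) * (1 - b1) := by
        simp only [hbbdef]; rw [if_pos h2.2]
      have hbv' : bb' t = b1 - 1 := by
        simp only [hbb'def]; rw [if_pos h2.2]
      rw [ha0, hbv, hbv']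
      have e0 : s ^ 2 * (0:ℝ) ^ 2 = 0 := by ring
      rw [e0, ENNReal.ofReal_zero, zero_mul, zero_add]
      refine ENNReal.ofReal_le_ofReal ?_
      have h4 : 0 ≤ -T - t := by linarith
      have h5 : -T - t ≤ 1 := by
        have h6 := h2.1; rw [hT'def] at h6; linarith
      exact ramp_energy_le hb1m.2 hb1η h4 h5 hηpos.le
    refine le_trans (lintegral_mono_ae hb) ?_
    rw [setLIntegral_const, Real.volume_Icc]
    have e2 : -T - -T' = 1 := by rw [hT'def]; ring
    rw [e2, ENNReal.ofReal_one, mul_one]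
  have hright : ∫⁻ t in Ioc T T',
      (ENNReal.ofReal (s ^ 2 * aa' t ^ 2) * f (bb t) ^ 2
        + ENNReal.ofReal ((1 - bb t) ^ 2 / 4 + bb' t ^ 2))
      ≤ ENNReal.ofReal (η^2/4 + η^2) := by
    have hb : ∀ᵐ t ∂(volume.restrict (Ioc T T')),
        (ENNReal.ofReal (s ^ 2 * aa' t ^ 2) * f (bb t) ^ 2
          + ENNReal.ofReal ((1 - bb t) ^ 2 / 4 + bb' t ^ 2))
        ≤ ENNReal.ofReal (η^2/4 + η^2) := by
      filter_upwards [ae_restrict_mem measurableSet_Ioc] with t h2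
      obtain ⟨hh1, hh2⟩ := hnotle t h2.1
      have ha0 : aa' t = 0 :=
        Set.indicator_of_notMem (fun hc => absurd hc.2 (not_le.mpr h2.1)) _
      have hbv : bb t = b2 + (t - T) * (1 - b2) := by
        simp only [hbbdef]; rw [if_neg hh1, if_neg hh2]
      have hbv' : bb' t = 1 - b2 := by
        simp only [hbb'def]; rw [if_neg hh1, if_neg hh2]
      rw [ha0, hbv, hbv']
      have e0 : s ^ 2 * (0:ℝ) ^ 2 = 0 := by ring
      rw [e0, ENNReal.ofReal_zero, zero_mul, zero_add]
      refine ENNReal.ofReal_le_ofReal ?_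
      have e3 : (1 - b2) ^ 2 = (b2 - 1) ^ 2 := by ring
      rw [e3]
      have h4 : 0 ≤ t - T := by linarith [h2.1]
      have h5 : t - T ≤ 1 := by
        have h6 := h2.2; rw [hT'def] at h6; linarith
      exact ramp_energy_le hb2m.2 hb2η h4 h5 hηpos.le
    refine le_trans (lintegral_mono_ae hb) ?_
    rw [setLIntegral_const, Real.volume_Ioc]
    have e2 : T' - T = 1 := by rw [hT'def]; ring
    rw [e2, ENNReal.ofReal_one, mul_one]
  have hmid : ∫⁻ t in Ioc (-T) T,
      (ENNReal.ofReal (s ^ 2 * aa' t ^ 2) * f (bb t) ^ 2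
        + ENNReal.ofReal ((1 - bb t) ^ 2 / 4 + bb' t ^ 2))
      ≤ ENNReal.ofReal M * x := by
    have hb : ∀ᵐ t ∂(volume.restrict (Ioc (-T) T)),
        (ENNReal.ofReal (s ^ 2 * aa' t ^ 2) * f (bb t) ^ 2
          + ENNReal.ofReal ((1 - bb t) ^ 2 / 4 + bb' t ^ 2))
        ≤ ENNReal.ofReal M * F t := by
      filter_upwards [(ae_ne_real T).filter_mono (ae_mono Measure.restrict_le_self),
        ae_restrict_mem measurableSet_Ioc] with t h1 h2
      obtain ⟨hh1, hh2⟩ := hmemIoc t h2 h1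
      have hmem' : t ∈ Icc (-T) T := ⟨h2.1.le, h2.2⟩
      have ha : aa' t = c * g t := Set.indicator_of_mem hmem' _
      have hbv : bb t = β t := by
        simp only [hbbdef]; rw [if_neg hh1, if_pos hh2]
      have hbv' : bb' t = β' t := by
        simp only [hbb'def]; rw [if_neg hh1, if_pos hh2]
      rw [ha, hbv, hbv']
      simp only [hF]
      have e1 : ENNReal.ofReal M * (ENNReal.ofReal (s ^ 2 * α' t ^ 2) * f (β t) ^ 2
          + ENNReal.ofReal ((1 - β t) ^ 2 / 4 + β' t ^ 2))
          = ENNReal.ofReal (M * (s ^ 2 * α' t ^ 2)) * f (β t) ^ 2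
            + ENNReal.ofReal (M * ((1 - β t) ^ 2 / 4 + β' t ^ 2)) := by
        rw [mul_add, ← mul_assoc, ← ENNReal.ofReal_mul hM0, ← ENNReal.ofReal_mul hM0]
      rw [e1]
      refine add_le_add (mul_le_mul_left (ENNReal.ofReal_le_ofReal ?_) _)
        (ENNReal.ofReal_le_ofReal ?_)
      · exact mid_first_le hMc (hgsq t)
      · exact le_mul_of_one_le_left (by positivity) hM1'
    refine le_trans (lintegral_mono_ae hb) ?_
    rw [lintegral_const_mul' _ _ ENNReal.ofReal_ne_top]
    exact mul_le_mul_right (le_trans (setLIntegral_le_lintegral _ _) (le_of_eq hFx)) _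
  -- split the energy
  have hdisj1 : Disjoint (Icc (-T') (-T)) (Ioc (-T) T) :=
    Set.disjoint_left.mpr fun u hu hu' => absurd hu'.1 (not_lt.mpr hu.2)
  have hdisj2 : Disjoint (Icc (-T') (-T) ∪ Ioc (-T) T) (Ioc T T') := by
    refine Set.disjoint_left.mpr fun u hu hu' => ?_
    rcases hu with hu | hu
    · exact absurd hu'.1 (not_lt.mpr (by linarith [hu.2]))
    · exact absurd hu'.1 (not_lt.mpr hu.2)
  have hsplitE : GfunT f s T' aa' bb bb'
      = ((∫⁻ t in Icc (-T') (-T), (ENNReal.ofReal (s ^ 2 * aa' t ^ 2) * f (bb t) ^ 2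
          + ENNReal.ofReal ((1 - bb t) ^ 2 / 4 + bb' t ^ 2)))
        + ∫⁻ t in Ioc (-T) T, (ENNReal.ofReal (s ^ 2 * aa' t ^ 2) * f (bb t) ^ 2
          + ENNReal.ofReal ((1 - bb t) ^ 2 / 4 + bb' t ^ 2)))
        + ∫⁻ t in Ioc T T', (ENNReal.ofReal (s ^ 2 * aa' t ^ 2) * f (bb t) ^ 2
          + ENNReal.ofReal ((1 - bb t) ^ 2 / 4 + bb' t ^ 2)) := by
    rw [GfunT, hIccsplit, lintegral_union measurableSet_Ioc hdisj2,
      lintegral_union measurableSet_Ioc hdisj1]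
  -- conclude
  have hMx : ENNReal.ofReal M * x ≤ x + ENNReal.ofReal ((ε:ℝ)/2) := by
    rw [hxe, ← ENNReal.ofReal_mul hM0, ← ENNReal.ofReal_add he0 (by positivity)]
    refine ENNReal.ofReal_le_ofReal ?_
    calc M * e ≤ (1+8*δ)*e := mul_le_mul_of_nonneg_right hM8 he0
    _ = e + 8*δ*e := by ring
    _ ≤ e + (ε:ℝ)/2 := by linarith [hδe]
  have hηε : ENNReal.ofReal (η^2/4+η^2) + ENNReal.ofReal (η^2/4+η^2)
      ≤ ENNReal.ofReal ((ε:ℝ)/2) := by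
    rw [← ENNReal.ofReal_add hCη hCη]
    refine ENNReal.ofReal_le_ofReal ?_
    linarith [hηsq]
  have hfinal : GfunT f s T' aa' bb bb' ≤ x + (ε:ℝ≥0∞) := by
    rw [hsplitE]
    refine le_trans (add_le_add (add_le_add hleft hmid) hright) ?_
    have e9 : (ENNReal.ofReal (η^2/4+η^2) + ENNReal.ofReal M * x) + ENNReal.ofReal (η^2/4+η^2)
        = ENNReal.ofReal M * x
          + (ENNReal.ofReal (η^2/4+η^2) + ENNReal.ofReal (η^2/4+η^2)) := by ring
    rw [e9]
    refine le_trans (add_le_add hMx hηε) ?_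
    rw [add_assoc, ← ENNReal.ofReal_add (by positivity) (by positivity)]
    have e10 : (ε:ℝ)/2 + (ε:ℝ)/2 = (ε:ℝ) := by ring
    rw [e10, ENNReal.ofReal_coe_nnreal]
  exact le_trans (le_trans (iInf₂_le T' hT'0)
    (sInf_le ⟨AA, aa', bb, bb', hadm, rfl⟩)) hfinal

/-- equivalence of the definitions (6.6) and (6.9) of `g₀`. -/
theorem stmt_13 (ℓ ℓ₁ : ℝ) (f : ℝ → ℝ≥0∞) (f₁ : ℝ → ℝ) (hf : FHyp ℓ ℓ₁ f f₁)
    (s : ℝ) (hs : 0 ≤ s) :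
    g0E f s = ⨅ (T : ℝ) (_ : 0 < T),
      sInf {x | ∃ α α' β β' : ℝ → ℝ, AdmT T α α' β β' ∧ x = GfunT f s T α' β β'} := by
  apply le_antisymm
  · refine le_iInf fun T => le_iInf fun hT => le_sInf fun y hy => ?_
    obtain ⟨a, a', b, b', hadm, rfl⟩ := hy
    exact easy_dir f s hT hadm
  · refine le_sInf fun y hy => ?_
    obtain ⟨a, a', b, b', hmem, rfl⟩ := hy
    exact hard_dir f s hmem
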